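/- Let S be a commutative noetherian ring, let x ∈ S be a non-zerodivisor, and let A, B be n × n matrices over S with AB = BA = xE_n. Let ᵗA and ᵗB denote the transposed matrices, and let ᵗĀ, ᵗB̄ : (S/(x))^n → (S/(x))^n be the induced S/(x)-linear maps. Then Ker ᵗĀ = Im ᵗB̄ and Ker ᵗB̄ = Im ᵗĀ; that is, the S/(x)-dual of the 2-periodic sequence ⋯ → (S/(x))^n —B̄→ (S/(x))^n —Ā→ (S/(x))^n → ⋯ is exact. -/
import Mathlib
open Matrix in

theorem key_lemma {S : Type u} [CommRing S] {x : S}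
    (hx : x ∈ nonZeroDivisors S) {n : ℕ} (A B : Matrix (Fin n) (Fin n) S)
    (hAB : A * B = x • (1 : Matrix (Fin n) (Fin n) S))
    (hBA : B * A = x • (1 : Matrix (Fin n) (Fin n) S)) :
    LinearMap.ker (A.map (Ideal.Quotient.mk (Ideal.span {x}))).mulVecLin =
      LinearMap.range (B.map (Ideal.Quotient.mk (Ideal.span {x}))).mulVecLin := by
  set f := Ideal.Quotient.mk (Ideal.span {x}) with hf
  ext v
  simp only [LinearMap.mem_ker, LinearMap.mem_range, Matrix.mulVecLin_apply]
  constructor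
  · intro hv
    choose w hw using fun i => Ideal.Quotient.mk_surjective (v i)
    have hwv : f ∘ w = v := funext hw
    have hAw : ∀ i, f ((A *ᵥ w) i) = 0 := by
      intro i
      rw [RingHom.map_mulVec, hwv]
      exact congrFun hv i
    have hmem : ∀ i, (A *ᵥ w) i ∈ Ideal.span ({x} : Set S) := fun i =>
      Ideal.Quotient.eq_zero_iff_mem.mp (hAw i)
    choose u hu using fun i => Ideal.mem_span_singleton'.mp (hmem i)
    have hAwu : A *ᵥ w = x • u := by
      funext i; rw [← hu i]; simp [mul_comm]
    have hBAw : B *ᵥ (A *ᵥ w) = x • w := by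
      rw [Matrix.mulVec_mulVec, hBA]; simp [Matrix.smul_mulVec]
    have : x • (B *ᵥ u) = x • w := by
      rw [← hBAw, hAwu, Matrix.mulVec_smul]
    have hBu : B *ᵥ u = w := by
      funext i
      have := congrFun this i
      simp only [Pi.smul_apply, smul_eq_mul] at this
      exact (mul_cancel_left_mem_nonZeroDivisors hx).mp this
    refine ⟨f ∘ u, ?_⟩
    funext i
    rw [← RingHom.map_mulVec, hBu]
    exact hw i
  · rintro ⟨t, rfl⟩
    rw [Matrix.mulVec_mulVec, ← Matrix.map_mul, hAB]
    have : (x • (1 : Matrix (Fin n) (Fin n) S)).map f = 0 := by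
      ext i j
      simp only [Matrix.map_apply, Matrix.smul_apply, smul_eq_mul, Matrix.zero_apply,
        hf, Ideal.Quotient.eq_zero_iff_mem, Ideal.mem_span_singleton]
      exact dvd_mul_right x _
    rw [this, Matrix.zero_mulVec]



/-- Proposition 7(3), second part: if `x` is a non-zerodivisor and `AB = BA = xE`, then the
`S/(x)`-dual of the `2`-periodic sequence given by `Ā` and `B̄` is exact; equivalently the
`2`-periodic sequence given by the transposed matrices `ᵗĀ`, `ᵗB̄` is exact, i.e.
`Ker ᵗĀ = Im ᵗB̄` and `Ker ᵗB̄ = Im ᵗĀ`. -/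
theorem stmt3 {S : Type u} [CommRing S] [IsNoetherianRing S] {x : S}
    (hx : x ∈ nonZeroDivisors S) {n : ℕ} (A B : Matrix (Fin n) (Fin n) S)
    (hAB : A * B = x • (1 : Matrix (Fin n) (Fin n) S))
    (hBA : B * A = x • (1 : Matrix (Fin n) (Fin n) S)) :
    LinearMap.ker (A.transpose.map (Ideal.Quotient.mk (Ideal.span {x}))).mulVecLin =
      LinearMap.range (B.transpose.map (Ideal.Quotient.mk (Ideal.span {x}))).mulVecLin ∧
    LinearMap.ker (B.transpose.map (Ideal.Quotient.mk (Ideal.span {x}))).mulVecLin =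
      LinearMap.range (A.transpose.map (Ideal.Quotient.mk (Ideal.span {x}))).mulVecLin := by
  have h1 : A.transpose * B.transpose = x • (1 : Matrix (Fin n) (Fin n) S) := by
    rw [← Matrix.transpose_mul, hBA, Matrix.transpose_smul, Matrix.transpose_one]
  have h2 : B.transpose * A.transpose = x • (1 : Matrix (Fin n) (Fin n) S) := by
    rw [← Matrix.transpose_mul, hAB, Matrix.transpose_smul, Matrix.transpose_one]
  exact ⟨key_lemma hx A.transpose B.transpose h1 h2, key_lemma hx B.transpose A.transpose h2 h1⟩
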